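/- arXiv:1504.07687 — 6 statements merged into one kernel-verified Lean document; each statement's English description precedes it below -/
import Mathlib

section
/- For any vector a ∈ ℝⁿ, the Khintchine constant K(a) = E_{x ~ uniform on {−1,1}ⁿ} |a · x| satisfies K(a) ≥ ‖a‖₂ / √2. -/
open Finset
open scoped symmDiff

namespace Kh

variable {n : ℕ}

def eps (x : Fin n → Bool) (i : Fin n) : ℝ := if x i then 1 else -1

lemma eps_mul_self (x : Fin n → Bool) (i : Fin n) : eps x i * eps x i = 1 := by
  unfold eps; split <;> norm_num

def chi (S : Finset (Fin n)) (x : Fin n → Bool) : ℝ := ∏ i ∈ S, eps x i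

lemma chi_mul_chi (S T : Finset (Fin n)) (x : Fin n → Bool) :
    chi S x * chi T x = chi (S ∆ T) x := by
  have h1 : (S ∆ T) ∪ (S ∩ T) = S ∪ T := symmDiff_sup_inf S T
  have hd : Disjoint (S ∆ T) (S ∩ T) := disjoint_symmDiff_inf S T
  calc chi S x * chi T x
      = (∏ i ∈ S ∪ T, eps x i) * ∏ i ∈ S ∩ T, eps x i := (Finset.prod_union_inter).symm
    _ = ((∏ i ∈ S ∆ T, eps x i) * ∏ i ∈ S ∩ T, eps x i) * ∏ i ∈ S ∩ T, eps x i := by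
        rw [← h1, Finset.prod_union hd]
    _ = chi (S ∆ T) x := by
        rw [mul_assoc, ← Finset.prod_mul_distrib]
        simp [eps_mul_self, chi]

def flip (i : Fin n) (x : Fin n → Bool) : Fin n → Bool := Function.update x i (!x i)

lemma flip_invol (i : Fin n) : Function.Involutive (flip (n := n) i) := by
  intro x; funext j
  rcases eq_or_ne j i with rfl | h <;> simp [flip, Function.update_apply, *]

lemma eps_flip (i : Fin n) (x : Fin n → Bool) (j : Fin n) :
    eps (flip i x) j = if j = i then -eps x i else eps x j := by
  rcases eq_or_ne j i with rfl | h
  · simp [flip, eps]; cases x j <;> norm_num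
  · simp [flip, eps, Function.update_apply, h]

lemma chi_flip (i : Fin n) (S : Finset (Fin n)) (x : Fin n → Bool) :
    chi S (flip i x) = (if i ∈ S then -1 else 1) * chi S x := by
  by_cases hi : i ∈ S
  · rw [if_pos hi]
    rw [chi, ← Finset.prod_erase_mul _ _ hi, chi, ← Finset.prod_erase_mul _ _ hi]
    have h1 : ∏ j ∈ S.erase i, eps (flip i x) j = ∏ j ∈ S.erase i, eps x j := by
      apply Finset.prod_congr rfl
      intro j hj
      rw [eps_flip, if_neg (Finset.ne_of_mem_erase hj)]
    rw [h1, eps_flip, if_pos rfl]; ring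
  · rw [if_neg hi, one_mul, chi, chi]
    apply Finset.prod_congr rfl
    intro j hj
    rw [eps_flip, if_neg (by rintro rfl; exact hi hj)]

lemma sum_chi (S : Finset (Fin n)) (hS : S ≠ ∅) :
    ∑ x : Fin n → Bool, chi S x = 0 := by
  obtain ⟨i, hi⟩ := Finset.nonempty_iff_ne_empty.2 hS
  have h : ∑ x : Fin n → Bool, chi S (flip i x) = ∑ x : Fin n → Bool, chi S x :=
    Fintype.sum_bijective (flip i) (flip_invol i).bijective _ _ (fun x => rfl)
  have h2 : ∑ x : Fin n → Bool, chi S x = - ∑ x : Fin n → Bool, chi S x := by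
    calc ∑ x : Fin n → Bool, chi S x = ∑ x : Fin n → Bool, chi S (flip i x) := h.symm
      _ = ∑ x : Fin n → Bool, -(chi S x) := by simp [chi_flip, if_pos hi]
      _ = - ∑ x : Fin n → Bool, chi S x := by simp
  linarith

lemma sum_chi_mul_chi (S T : Finset (Fin n)) :
    ∑ x : Fin n → Bool, chi S x * chi T x = if S = T then (2 ^ n : ℝ) else 0 := by
  simp only [chi_mul_chi]
  rcases eq_or_ne S T with rfl | h
  · simp [chi, symmDiff_self, Finset.card_univ]
  · rw [if_neg h]
    apply sum_chi
    simpa [symmDiff_eq_bot] using h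


lemma eps_mul_eps (y x : Fin n → Bool) (i : Fin n) :
    eps y i * eps x i = if y i = x i then 1 else -1 := by
  unfold eps; cases hy : y i <;> cases hx : x i <;> norm_num

def hat (f : (Fin n → Bool) → ℝ) (S : Finset (Fin n)) : ℝ :=
  ∑ x : Fin n → Bool, f x * chi S x

lemma kernel (y x : Fin n → Bool) :
    ∑ S : Finset (Fin n), chi S y * chi S x = if y = x then (2 ^ n : ℝ) else 0 := by
  have h1 : ∀ S : Finset (Fin n), chi S y * chi S x
      = (∏ i ∈ S, (eps y i * eps x i)) * ∏ i ∈ Sᶜ, (1 : ℝ) := by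
    intro S; rw [chi, chi, ← Finset.prod_mul_distrib]; simp
  rw [Finset.sum_congr rfl (fun S _ => h1 S), ← Fintype.prod_add]
  rcases eq_or_ne y x with rfl | h
  · rw [if_pos rfl]
    have : ∀ i : Fin n, eps y i * eps y i + 1 = 2 := by
      intro i; rw [eps_mul_self]; norm_num
    rw [Finset.prod_congr rfl (fun i _ => this i), Finset.prod_const, Finset.card_univ]
    simp
  · rw [if_neg h]
    obtain ⟨i, hi⟩ : ∃ i, y i ≠ x i := by
      by_contra hc; push_neg at hc; exact h (funext hc)
    apply Finset.prod_eq_zero (Finset.mem_univ i)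
    rw [eps_mul_eps, if_neg hi]; ring

lemma inversion (f : (Fin n → Bool) → ℝ) (x : Fin n → Bool) :
    ∑ S : Finset (Fin n), hat f S * chi S x = 2 ^ n * f x := by
  calc ∑ S : Finset (Fin n), hat f S * chi S x
      = ∑ S : Finset (Fin n), ∑ y : Fin n → Bool, f y * (chi S y * chi S x) := by
        apply Finset.sum_congr rfl; intro S _
        rw [hat, Finset.sum_mul]
        apply Finset.sum_congr rfl; intro y _; ring
    _ = ∑ y : Fin n → Bool, ∑ S : Finset (Fin n), f y * (chi S y * chi S x) :=
        Finset.sum_comm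
    _ = ∑ y : Fin n → Bool, f y * (if y = x then (2 ^ n : ℝ) else 0) := by
        apply Finset.sum_congr rfl; intro y _
        rw [← kernel y x, Finset.mul_sum]
    _ = 2 ^ n * f x := by
        simp [mul_ite, Finset.sum_ite_eq, mul_comm]

lemma parseval (f g : (Fin n → Bool) → ℝ) :
    ∑ S : Finset (Fin n), hat f S * hat g S = 2 ^ n * ∑ x : Fin n → Bool, f x * g x := by
  calc ∑ S : Finset (Fin n), hat f S * hat g S
      = ∑ S : Finset (Fin n), ∑ x : Fin n → Bool, g x * (hat f S * chi S x) := by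
        apply Finset.sum_congr rfl; intro S _
        rw [show hat g S = ∑ x : Fin n → Bool, g x * chi S x from rfl, Finset.mul_sum]
        apply Finset.sum_congr rfl; intro x _; ring
    _ = ∑ x : Fin n → Bool, ∑ S : Finset (Fin n), g x * (hat f S * chi S x) :=
        Finset.sum_comm
    _ = ∑ x : Fin n → Bool, g x * (2 ^ n * f x) := by
        apply Finset.sum_congr rfl; intro x _
        rw [← Finset.mul_sum, inversion]
    _ = 2 ^ n * ∑ x : Fin n → Bool, f x * g x := by
        rw [Finset.mul_sum]; apply Finset.sum_congr rfl; intros; ring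


lemma sum_eps_mul_eps (i j : Fin n) :
    ∑ x : Fin n → Bool, eps x i * eps x j = if i = j then (2 ^ n : ℝ) else 0 := by
  have h := sum_chi_mul_chi ({i} : Finset (Fin n)) {j}
  simpa [chi, Finset.singleton_inj] using h

lemma sum_sq (a : Fin n → ℝ) :
    ∑ x : Fin n → Bool, (∑ i, a i * eps x i) ^ 2 = 2 ^ n * ∑ i, a i ^ 2 := by
  have expand : ∀ x : Fin n → Bool,
      (∑ i, a i * eps x i) ^ 2 = ∑ i, ∑ j, (a i * a j) * (eps x i * eps x j) := by
    intro x
    rw [sq, Finset.sum_mul_sum]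
    exact Finset.sum_congr rfl fun i _ => Finset.sum_congr rfl fun j _ => by ring
  calc ∑ x : Fin n → Bool, (∑ i, a i * eps x i) ^ 2
      = ∑ x : Fin n → Bool, ∑ i, ∑ j, (a i * a j) * (eps x i * eps x j) :=
        Finset.sum_congr rfl fun x _ => expand x
    _ = ∑ i, ∑ x : Fin n → Bool, ∑ j, (a i * a j) * (eps x i * eps x j) := Finset.sum_comm
    _ = ∑ i, ∑ j, ∑ x : Fin n → Bool, (a i * a j) * (eps x i * eps x j) :=
        Finset.sum_congr rfl fun i _ => Finset.sum_comm
    _ = ∑ i, ∑ j, (a i * a j) * (if i = j then (2 ^ n : ℝ) else 0) := by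
        apply Finset.sum_congr rfl; intro i _
        apply Finset.sum_congr rfl; intro j _
        rw [← Finset.mul_sum, sum_eps_mul_eps]
    _ = 2 ^ n * ∑ i, a i ^ 2 := by
        simp only [mul_ite, mul_zero, Finset.sum_ite_eq, Finset.mem_univ, if_pos]
        rw [Finset.mul_sum]
        exact Finset.sum_congr rfl fun i _ => by ring

def negx (x : Fin n → Bool) : Fin n → Bool := fun i => !x i

lemma negx_invol : Function.Involutive (negx (n := n)) := by
  intro x; funext i; simp [negx]

lemma eps_negx (x : Fin n → Bool) (i : Fin n) : eps (negx x) i = -eps x i := by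
  unfold eps negx; cases h : x i <;> simp [h]

lemma chi_negx (S : Finset (Fin n)) (x : Fin n → Bool) :
    chi S (negx x) = (-1) ^ S.card * chi S x := by
  rw [chi, chi, ← Finset.prod_const, ← Finset.prod_mul_distrib]
  exact Finset.prod_congr rfl fun i _ => by rw [eps_negx]; ring

lemma hat_odd (a : Fin n → ℝ) (S : Finset (Fin n)) (hS : Odd S.card) :
    hat (fun x => |∑ i, a i * eps x i|) S = 0 := by
  set F : (Fin n → Bool) → ℝ := fun x => |∑ i, a i * eps x i| with hF
  have hFneg : ∀ x, F (negx x) = F x := by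
    intro x
    have : ∑ i, a i * eps (negx x) i = -∑ i, a i * eps x i := by
      rw [← Finset.sum_neg_distrib]
      exact Finset.sum_congr rfl fun i _ => by rw [eps_negx]; ring
    simp only [hF, this, abs_neg]
  have h : ∑ x : Fin n → Bool, F (negx x) * chi S (negx x)
      = ∑ x : Fin n → Bool, F x * chi S x :=
    Fintype.sum_bijective negx negx_invol.bijective _ _ (fun x => rfl)
  have h2 : hat F S = -hat F S := by
    calc hat F S = ∑ x : Fin n → Bool, F x * chi S x := rfl
      _ = ∑ x : Fin n → Bool, F (negx x) * chi S (negx x) := h.symm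
      _ = ∑ x : Fin n → Bool, -(F x * chi S x) := by
          apply Finset.sum_congr rfl; intro x _
          rw [hFneg, chi_negx, hS.neg_one_pow]; ring
      _ = -hat F S := by rw [hat, ← Finset.sum_neg_distrib]
  linarith

lemma hat_flip (F : (Fin n → Bool) → ℝ) (i : Fin n) (S : Finset (Fin n)) :
    hat (fun x => F (flip i x)) S = (if i ∈ S then -1 else 1) * hat F S := by
  have h : ∑ x : Fin n → Bool, F (flip i (flip i x)) * chi S (flip i x)
      = ∑ x : Fin n → Bool, F (flip i x) * chi S x :=
    Fintype.sum_bijective (flip i) (flip_invol i).bijective _ _ (fun x => rfl)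
  calc hat (fun x => F (flip i x)) S
      = ∑ x : Fin n → Bool, F (flip i (flip i x)) * chi S (flip i x) := h.symm
    _ = ∑ x : Fin n → Bool, (if i ∈ S then -1 else 1) * (F x * chi S x) := by
        apply Finset.sum_congr rfl; intro x _
        rw [flip_invol i x, chi_flip]; ring
    _ = (if i ∈ S then -1 else 1) * hat F S := by rw [hat, Finset.mul_sum]


lemma g_flip (a : Fin n → ℝ) (i : Fin n) (x : Fin n → Bool) :
    ∑ j, a j * eps (flip i x) j = (∑ j, a j * eps x j) - 2 * a i * eps x i := by
  have h : ∀ j, a j * eps (flip i x) j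
      = a j * eps x j - (if j = i then 2 * a i * eps x i else 0) := by
    intro j
    rw [eps_flip]
    rcases eq_or_ne j i with rfl | hj
    · simp; ring
    · simp [hj]
  rw [Finset.sum_congr rfl fun j _ => h j, Finset.sum_sub_distrib,
    Finset.sum_ite_eq' Finset.univ i (fun _ => 2 * a i * eps x i)]
  simp

lemma abs_eps (x : Fin n → Bool) (i : Fin n) : |eps x i| = 1 := by
  unfold eps; split <;> norm_num

lemma D_bound (a : Fin n → ℝ) (i : Fin n) (x : Fin n → Bool) :
    |(|(∑ j, a j * eps x j)|) - (|(∑ j, a j * eps (flip i x) j)|)| ≤ 2 * |a i| := by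
  refine le_trans (abs_abs_sub_abs_le_abs_sub _ _) ?_
  rw [g_flip]
  have : (∑ j, a j * eps x j) - ((∑ j, a j * eps x j) - 2 * a i * eps x i)
      = 2 * a i * eps x i := by ring
  rw [this, abs_mul, abs_eps, abs_mul]
  norm_num

lemma hat_sub (F G : (Fin n → Bool) → ℝ) (S : Finset (Fin n)) :
    hat (fun x => F x - G x) S = hat F S - hat G S := by
  simp [hat, sub_mul, Finset.sum_sub_distrib]

lemma coord_bound (a : Fin n → ℝ) (i : Fin n) :
    ∑ S : Finset (Fin n),
        (if i ∈ S then (hat (fun x => |∑ j, a j * eps x j|) S) ^ 2 else 0)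
      ≤ 2 ^ n * 2 ^ n * a i ^ 2 := by
  set F : (Fin n → Bool) → ℝ := fun x => |∑ j, a j * eps x j| with hF
  set D : (Fin n → Bool) → ℝ := fun x => F x - F (flip i x) with hD
  have hhatD : ∀ S : Finset (Fin n),
      hat D S = if i ∈ S then 2 * hat F S else 0 := by
    intro S
    have : hat D S = hat F S - hat (fun x => F (flip i x)) S := hat_sub _ _ S
    rw [this, hat_flip]
    split <;> ring
  have hpar := parseval D D
  have hDsq : ∑ x : Fin n → Bool, D x * D x ≤ ∑ x : Fin n → Bool, 4 * a i ^ 2 := by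
    apply Finset.sum_le_sum
    intro x _
    have hb := D_bound a i x
    have : D x * D x = |D x| * |D x| := (abs_mul_abs_self _).symm
    rw [this]
    have h4 : (2 : ℝ) * |a i| * (2 * |a i|) = 4 * a i ^ 2 := by
      rw [sq, ← abs_mul_abs_self (a i)]; ring
    calc |D x| * |D x| ≤ 2 * |a i| * (2 * |a i|) :=
        mul_le_mul hb hb (abs_nonneg _) (by positivity)
      _ = 4 * a i ^ 2 := h4
  have hcard : ∑ x : Fin n → Bool, (4 : ℝ) * a i ^ 2 = 2 ^ n * (4 * a i ^ 2) := by
    rw [Finset.sum_const, Finset.card_univ]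
    simp [mul_comm]
  have hLHS : ∑ S : Finset (Fin n), hat D S * hat D S
      = 4 * ∑ S : Finset (Fin n),
          (if i ∈ S then (hat F S) ^ 2 else 0) := by
    rw [Finset.mul_sum]
    apply Finset.sum_congr rfl
    intro S _
    rw [hhatD]
    split <;> ring
  have := hpar
  rw [hLHS] at this
  have hDsq' : ∑ x : Fin n → Bool, D x * D x ≤ 2 ^ n * (4 * a i ^ 2) :=
    le_trans hDsq (le_of_eq hcard)
  have hfin : 4 * ∑ S : Finset (Fin n), (if i ∈ S then (hat F S) ^ 2 else 0)
      ≤ 2 ^ n * (2 ^ n * (4 * a i ^ 2)) := by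
    rw [this]
    exact mul_le_mul_of_nonneg_left hDsq' (by positivity)
  nlinarith [hfin]

theorem main (n : ℕ) (a : Fin n → ℝ) :
    Real.sqrt (∑ i, (a i) ^ 2) / Real.sqrt 2 ≤
      (∑ x : Fin n → Bool, |∑ i, a i * eps x i|) / 2 ^ n := by
  set F : (Fin n → Bool) → ℝ := fun x => |∑ j, a j * eps x j| with hF
  set A : ℝ := ∑ i, a i ^ 2 with hA
  have hA0 : 0 ≤ A := Finset.sum_nonneg fun i _ => sq_nonneg _
  set T : ℝ := ∑ x : Fin n → Bool, F x with hT
  have hT0 : 0 ≤ T := Finset.sum_nonneg fun x _ => abs_nonneg _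
  -- hat F ∅ = T
  have hhat0 : hat F ∅ = T := by
    simp [hat, chi, hT]
  -- Parseval for F
  have hparF : ∑ S : Finset (Fin n), hat F S * hat F S = 2 ^ n * (2 ^ n * A) := by
    rw [parseval F F]
    congr 1
    calc ∑ x : Fin n → Bool, F x * F x
        = ∑ x : Fin n → Bool, (∑ j, a j * eps x j) ^ 2 := by
          apply Finset.sum_congr rfl; intro x _
          rw [hF, abs_mul_abs_self, sq]
      _ = 2 ^ n * A := sum_sq a
  -- sum of card-weighted coefficients
  have hcardsum : ∑ S : Finset (Fin n), (S.card : ℝ) * (hat F S) ^ 2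
      ≤ 2 ^ n * 2 ^ n * A := by
    have hswap : ∑ S : Finset (Fin n), (S.card : ℝ) * (hat F S) ^ 2
        = ∑ i, ∑ S : Finset (Fin n), (if i ∈ S then (hat F S) ^ 2 else 0) := by
      rw [Finset.sum_comm]
      apply Finset.sum_congr rfl
      intro S _
      rw [Finset.sum_ite_mem, Finset.univ_inter, Finset.sum_const, nsmul_eq_mul]
    rw [hswap]
    calc ∑ i, ∑ S : Finset (Fin n), (if i ∈ S then (hat F S) ^ 2 else 0)
        ≤ ∑ i, 2 ^ n * 2 ^ n * a i ^ 2 :=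
          Finset.sum_le_sum fun i _ => coord_bound a i
      _ = 2 ^ n * 2 ^ n * A := by rw [hA, Finset.mul_sum]
  -- termwise inequality
  have hterm : ∀ S : Finset (Fin n),
      2 * (hat F S) ^ 2 ≤ (S.card : ℝ) * (hat F S) ^ 2
        + (if S = ∅ then 2 * (hat F S) ^ 2 else 0) := by
    intro S
    rcases eq_or_ne S ∅ with rfl | hS
    · simp
    · rw [if_neg hS, add_zero]
      rcases eq_or_ne (hat F S) 0 with h0 | h0
      · simp [h0]
      · have hodd : ¬ Odd S.card := fun hc => h0 (hat_odd a S hc)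
        have heven : Even S.card := Nat.not_odd_iff_even.1 hodd
        have hpos : S.card ≠ 0 := by
          simpa [Finset.card_eq_zero] using hS
        have h2 : 2 ≤ S.card := by
          rcases heven with ⟨k, hk⟩
          omega
        have h2' : (2 : ℝ) ≤ (S.card : ℝ) := by exact_mod_cast h2
        nlinarith [sq_nonneg (hat F S)]
  have hsum : 2 * ∑ S : Finset (Fin n), (hat F S) ^ 2
      ≤ (∑ S : Finset (Fin n), (S.card : ℝ) * (hat F S) ^ 2) + 2 * T ^ 2 := by
    have := Finset.sum_le_sum fun S (_ : S ∈ Finset.univ) => hterm S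
    rw [Finset.sum_add_distrib,
      Finset.sum_ite_eq' Finset.univ (∅ : Finset (Fin n))
        (fun S => 2 * (hat F S) ^ 2)] at this
    simpa [Finset.mul_sum, hhat0] using this
  have hsq : ∀ S : Finset (Fin n), hat F S * hat F S = (hat F S) ^ 2 :=
    fun S => (sq (hat F S)).symm
  have hparF' : ∑ S : Finset (Fin n), (hat F S) ^ 2 = 2 ^ n * (2 ^ n * A) := by
    rw [← hparF]; exact Finset.sum_congr rfl fun S _ => (hsq S).symm
  have key : 2 ^ n * (2 ^ n * A) ≤ 2 * T ^ 2 := by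
    have := hsum
    rw [hparF'] at this
    nlinarith [hcardsum]
  -- final algebra
  have hP : (0 : ℝ) < 2 ^ n := by positivity
  rw [div_le_div_iff₀ (Real.sqrt_pos.2 (by norm_num)) hP]
  have h1 : Real.sqrt A * 2 ^ n = Real.sqrt (A * (2 ^ n) ^ 2) := by
    rw [Real.sqrt_mul hA0, Real.sqrt_sq hP.le]
  have h2 : T * Real.sqrt 2 = Real.sqrt (T ^ 2 * 2) := by
    rw [Real.sqrt_mul (sq_nonneg T), Real.sqrt_sq hT0]
  calc Real.sqrt A * 2 ^ n = Real.sqrt (A * (2 ^ n) ^ 2) := h1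
    _ ≤ Real.sqrt (T ^ 2 * 2) := Real.sqrt_le_sqrt (by nlinarith)
    _ = T * Real.sqrt 2 := h2.symm

end Kh

/-- Khintchine's inequality: `K(a) ≥ ‖a‖₂ / √2`. -/
theorem khintchine_ge_norm_div_sqrt_two (n : ℕ) (a : Fin n → ℝ) :
    Real.sqrt (∑ i, (a i) ^ 2) / Real.sqrt 2 ≤
      (∑ x : Fin n → Bool, |∑ i, a i * (if x i then 1 else -1)|) / 2 ^ n := by
  have h := Kh.main n a
  simpa [Kh.eps] using h
end

section
/- Let w ∈ ℤⁿ, set a₀ = (2w₁,…,2wₙ,0) ∈ ℝ^{n+1} and a₁ = (2w₁,…,2wₙ,1) ∈ ℝ^{n+1}. Then Pr_{x ~ uniform on {−1,1}ⁿ}[w · x = 0] = K(a₁) − K(a₀), where K(a) = E_{y ~ uniform on {−1,1}^{n+1}} |a · y|. -/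
lemma key_abs (s : ℤ) :
    |2*(s:ℝ)+1| + |2*(s:ℝ)-1| = 2*|2*(s:ℝ)| + (if s = 0 then 2 else 0) := by
  rcases lt_trichotomy s 0 with h|h|h
  · have h1 : (s:ℝ) ≤ -1 := by exact_mod_cast (by omega : s ≤ -1)
    rw [if_neg h.ne, abs_of_nonpos (by linarith), abs_of_nonpos (by linarith),
      abs_of_nonpos (by linarith)]; ring
  · subst h; norm_num
  · have h1 : (1:ℝ) ≤ (s:ℝ) := by exact_mod_cast (by omega : 1 ≤ s)
    rw [if_neg h.ne', abs_of_nonneg (by linarith), abs_of_nonneg (by linarith),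
      abs_of_nonneg (by linarith)]; ring

def snocEquiv (n : ℕ) : ((Fin n → Bool) × Bool) ≃ (Fin (n+1) → Bool) where
  toFun p := Fin.snoc p.1 p.2
  invFun y := (fun i => y i.castSucc, y (Fin.last n))
  left_inv p := by simp
  right_inv y := by
    funext i
    induction i using Fin.lastCases <;> simp

lemma innerSumSnoc (n : ℕ) (w : Fin n → ℤ) (c : ℝ) (y : Fin (n+1) → Bool) :
    ∑ i : Fin (n+1), (Fin.snoc (fun i : Fin n => 2*(w i:ℝ)) c) i * (if y i then 1 else -1)
      = 2 * ((∑ i, w i * (if y i.castSucc then 1 else -1) : ℤ) : ℝ)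
        + c * (if y (Fin.last n) then 1 else -1) := by
  rw [Fin.sum_univ_castSucc]
  simp only [Fin.snoc_castSucc, Fin.snoc_last]
  push_cast
  rw [Finset.mul_sum]
  congr 1
  refine Finset.sum_congr rfl fun i _ => ?_
  by_cases h : y i.castSucc <;> simp [h]

/-- `Pr[w·x = 0] = K(a₁) − K(a₀)` where `a₀ = (2w,0)` and `a₁ = (2w,1)`. -/
theorem partition_prob_eq_khintchine_diff (n : ℕ) (w : Fin n → ℤ) :
    ((Finset.univ.filter fun x : Fin n → Bool =>
        (∑ i, w i * (if x i then 1 else -1)) = 0).card : ℝ) / 2 ^ n =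
      (∑ y : Fin (n + 1) → Bool,
          |∑ i : Fin (n + 1),
            (Fin.snoc (fun i : Fin n => 2 * (w i : ℝ)) 1) i * (if y i then 1 else -1)|) / 2 ^ (n + 1)
      - (∑ y : Fin (n + 1) → Bool,
          |∑ i : Fin (n + 1),
            (Fin.snoc (fun i : Fin n => 2 * (w i : ℝ)) 0) i * (if y i then 1 else -1)|) / 2 ^ (n + 1) := by
  set S : (Fin n → Bool) → ℤ := fun x => ∑ i, w i * (if x i then 1 else -1) with hS
  have sumA : ∀ c : ℝ, (∑ y : Fin (n + 1) → Bool,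
      |∑ i : Fin (n + 1),
        (Fin.snoc (fun i : Fin n => 2 * (w i : ℝ)) c) i * (if y i then 1 else -1)|)
      = ∑ x : Fin n → Bool, (|2*((S x : ℤ):ℝ) + c| + |2*((S x : ℤ):ℝ) - c|) := by
    intro c
    rw [← Equiv.sum_comp (snocEquiv n)]
    rw [Fintype.sum_prod_type]
    refine Finset.sum_congr rfl fun x _ => ?_
    rw [Fintype.sum_bool]
    have h1 := innerSumSnoc n w c (Fin.snoc x true)
    have h2 := innerSumSnoc n w c (Fin.snoc x false)
    change abs (∑ i : Fin (n+1), (Fin.snoc (fun i : Fin n => 2 * (w i : ℝ)) c : Fin (n+1) → ℝ) i * (if (Fin.snoc x true : Fin (n+1) → Bool) i then (1:ℝ) else -1))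
      + abs (∑ i : Fin (n+1), (Fin.snoc (fun i : Fin n => 2 * (w i : ℝ)) c : Fin (n+1) → ℝ) i * (if (Fin.snoc x false : Fin (n+1) → Bool) i then (1:ℝ) else -1)) = _
    rw [h1, h2]
    simp [hS, sub_eq_add_neg]
  rw [sumA 1, sumA 0]
  have hdiff : (∑ x : Fin n → Bool, (|2*((S x : ℤ):ℝ) + 1| + |2*((S x : ℤ):ℝ) - 1|))
      - (∑ x : Fin n → Bool, (|2*((S x : ℤ):ℝ) + 0| + |2*((S x : ℤ):ℝ) - 0|))
      = ∑ x : Fin n → Bool, (if S x = 0 then (2:ℝ) else 0) := by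
    rw [← Finset.sum_sub_distrib]
    refine Finset.sum_congr rfl fun x _ => ?_
    have := key_abs (S x)
    rw [add_zero, sub_zero]
    linarith [this]
  have hcard : (∑ x : Fin n → Bool, (if S x = 0 then (2:ℝ) else 0))
      = 2 * ((Finset.univ.filter fun x : Fin n → Bool => S x = 0).card : ℝ) := by
    rw [Finset.sum_ite, Finset.sum_const, Finset.sum_const, smul_zero, add_zero,
      nsmul_eq_mul, mul_comm]
  rw [div_sub_div_same, hdiff, hcard,
    show ((2:ℝ)^(n+1)) = 2 * 2^n by ring, mul_div_mul_left _ _ (two_ne_zero)]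
end

section
/- Chow's theorem: Let h : {0,1}ⁿ → {0,1} be a halfspace, i.e., h(x) = sign⁺(a₀ + ∑_{i=1}^n aᵢ(−1)^{1+xᵢ}) for reals a₀,…,aₙ such that a₀ + ∑_{i=1}^n aᵢ(−1)^{1+xᵢ} ≠ 0 for all x ∈ {0,1}ⁿ. If f : {0,1}ⁿ → [0,1] has the same Chow parameters as h (f̂(i) = ĥ(i) for all 0 ≤ i ≤ n), then f = h. -/
/-- Chow's theorem: a bounded function with the same Chow parameters as a halfspace
(whose defining affine form never vanishes on the cube) equals that halfspace. -/
theorem chow_theorem (n : ℕ) (a : Fin (n + 1) → ℝ)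
    (hnv : ∀ x : Fin n → Bool, a 0 + ∑ i : Fin n, a i.succ * (if x i then 1 else -1) ≠ 0)
    (h : (Fin n → Bool) → ℝ)
    (hh : ∀ x, h x =
      if 0 ≤ a 0 + ∑ i : Fin n, a i.succ * (if x i then 1 else -1) then 1 else 0)
    (f : (Fin n → Bool) → ℝ) (hf : ∀ x, 0 ≤ f x ∧ f x ≤ 1)
    (h0 : (∑ x : Fin n → Bool, f x) / 2 ^ n = (∑ x : Fin n → Bool, h x) / 2 ^ n)
    (hi : ∀ i : Fin n,
      (∑ x : Fin n → Bool, f x * (if x i then 1 else -1)) / 2 ^ n =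
        (∑ x : Fin n → Bool, h x * (if x i then 1 else -1)) / 2 ^ n) :
    f = h := by
  set L : (Fin n → Bool) → ℝ :=
    fun x => a 0 + ∑ i : Fin n, a i.succ * (if x i then 1 else -1) with hL
  have h2 : (2 : ℝ) ^ n ≠ 0 := by positivity
  have hsum0 : ∑ x : Fin n → Bool, f x = ∑ x : Fin n → Bool, h x := by
    field_simp at h0; exact h0
  have hsumi : ∀ i : Fin n,
      (∑ x : Fin n → Bool, f x * (if x i then 1 else -1)) =
        ∑ x : Fin n → Bool, h x * (if x i then 1 else -1) := by
    intro i; have := hi i; field_simp at this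
    simp only [mul_ite, mul_one, mul_neg_one] at this ⊢; exact this
  have key : ∑ x : Fin n → Bool, (h x - f x) * L x = 0 := by
    have step1 : ∀ x : Fin n → Bool, (h x - f x) * L x
        = a 0 * (h x - f x) + ∑ i : Fin n,
            a i.succ * (h x * (if x i then 1 else -1) - f x * (if x i then 1 else -1)) := by
      intro x
      simp only [hL]
      rw [mul_add, Finset.mul_sum]
      congr 1
      · ring
      · exact Finset.sum_congr rfl (fun i _ => by ring)
    have expand : ∑ x : Fin n → Bool, (h x - f x) * L x =
        a 0 * (∑ x : Fin n → Bool, h x - ∑ x : Fin n → Bool, f x)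
          + ∑ i : Fin n, a i.succ *
            ((∑ x : Fin n → Bool, h x * (if x i then 1 else -1))
              - ∑ x : Fin n → Bool, f x * (if x i then 1 else -1)) := by
      rw [Finset.sum_congr rfl (fun x _ => step1 x), Finset.sum_add_distrib,
        Finset.sum_comm, ← Finset.mul_sum, Finset.sum_sub_distrib]
      congr 1
      apply Finset.sum_congr rfl
      intro i _
      rw [← Finset.mul_sum, Finset.sum_sub_distrib]
    rw [expand, hsum0, sub_self, mul_zero, zero_add]
    exact Finset.sum_eq_zero fun i _ => by rw [hsumi i, sub_self, mul_zero]
  have hnn : ∀ x ∈ (Finset.univ : Finset (Fin n → Bool)), 0 ≤ (h x - f x) * L x := by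
    intro x _
    by_cases hx : 0 ≤ L x
    · have : h x = 1 := by rw [hh x]; exact if_pos hx
      have := (hf x).2
      apply mul_nonneg <;> linarith
    · have : h x = 0 := by rw [hh x]; exact if_neg hx
      have := (hf x).1
      have := mul_nonneg this (le_of_lt (neg_pos.mpr (lt_of_not_ge hx)))
      nlinarith
  funext x
  have hz : (h x - f x) * L x = 0 :=
    (Finset.sum_eq_zero_iff_of_nonneg hnn).mp key x (Finset.mem_univ x)
  have := hnv x
  rcases mul_eq_zero.mp hz with h1 | h1
  · linarith [sub_eq_zero.mp h1]
  · exact absurd h1 (hnv x)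
end

section
/- In a single-item auction environment with n bidders having independent type distributions, for any ex post allocation rule x (choosing at most one winner per type profile) with induced interim allocation rule y, and any sets S₁ ⊆ V₁, …, Sₙ ⊆ Vₙ of distinguished types, the Border inequality holds: ∑_{i=1}^n ∑_{vᵢ ∈ Sᵢ} fᵢ(vᵢ)·yᵢ(vᵢ) ≤ 1 − ∏_{i=1}^n (1 − ∑_{vᵢ ∈ Sᵢ} fᵢ(vᵢ)). -/
open Finset in
/-- Border's necessary condition: for any ex post single-item allocation rule `x`
(nonnegative winning probabilities summing to at most 1 on each type profile) with
induced interim rule `y`, and any sets of distinguished types `S i`, the probability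
that the winner has a distinguished type is at most the probability that some bidder
has a distinguished type. -/
theorem border_inequality (n : ℕ) (V : Fin n → Type*) [∀ i, Fintype (V i)]
    [∀ i, DecidableEq (V i)]
    (f : ∀ i, V i → ℝ) (hf : ∀ i t, 0 ≤ f i t) (hf1 : ∀ i, ∑ t, f i t = 1)
    (x : (∀ i, V i) → Fin n → ℝ) (hx : ∀ v i, 0 ≤ x v i) (hx1 : ∀ v, ∑ i, x v i ≤ 1)
    (y : ∀ i, V i → ℝ)
    (hy : ∀ i t, y i t =
      ∑ v : ∀ j, V j, if v i = t then (∏ j ∈ univ.erase i, f j (v j)) * x v i else 0)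
    (S : ∀ i, Finset (V i)) :
    ∑ i, ∑ t ∈ S i, f i t * y i t ≤ 1 - ∏ i, (1 - ∑ t ∈ S i, f i t) := by
  classical
  set p : (∀ j, V j) → ℝ := fun v => ∏ j, f j (v j) with hp
  have hp0 : ∀ v, 0 ≤ p v := fun v => prod_nonneg fun j _ => hf j (v j)
  have hsum_p : ∑ v : ∀ j, V j, p v = 1 := by
    rw [← Fintype.piFinset_univ, ← Finset.prod_univ_sum]
    simp [hf1]
  have hA : ∀ i, ∑ t ∈ S i, f i t * y i t
      = ∑ v : ∀ j, V j, if v i ∈ S i then p v * x v i else 0 := by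
    intro i
    calc ∑ t ∈ S i, f i t * y i t
        = ∑ t ∈ S i, ∑ v : ∀ j, V j, if v i = t then p v * x v i else 0 := by
          refine sum_congr rfl fun t ht => ?_
          rw [hy, mul_sum]
          refine sum_congr rfl fun v _ => ?_
          split_ifs with h
          · rw [← h, ← mul_assoc, hp]
            rw [Finset.mul_prod_erase univ (fun j => f j (v j)) (mem_univ i)]
          · ring
      _ = ∑ v : ∀ j, V j, ∑ t ∈ S i, if v i = t then p v * x v i else 0 := sum_comm
      _ = ∑ v : ∀ j, V j, if v i ∈ S i then p v * x v i else 0 := by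
          refine sum_congr rfl fun v _ => ?_
          simp
  have key : ∑ i, ∑ t ∈ S i, f i t * y i t
      = ∑ v : ∀ j, V j, ∑ i, if v i ∈ S i then p v * x v i else 0 := by
    rw [Finset.sum_comm]
    exact sum_congr rfl fun i _ => hA i
  have hbound : ∀ v : ∀ j, V j,
      (∑ i, if v i ∈ S i then p v * x v i else 0)
        ≤ (if ∀ i, v i ∉ S i then 0 else p v) := by
    intro v
    split_ifs with h
    · rw [Finset.sum_eq_zero]
      intro i _
      simp [h i]
    · calc (∑ i, if v i ∈ S i then p v * x v i else 0)
          ≤ ∑ i, p v * x v i := by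
            refine Finset.sum_le_sum fun i _ => ?_
            split_ifs
            · exact le_refl _
            · exact mul_nonneg (hp0 v) (hx v i)
        _ = p v * ∑ i, x v i := by rw [Finset.mul_sum]
        _ ≤ p v * 1 := mul_le_mul_of_nonneg_left (hx1 v) (hp0 v)
        _ = p v := mul_one _
  have hprod : ∑ v : ∀ j, V j, (if ∀ i, v i ∉ S i then p v else 0)
      = ∏ i, (1 - ∑ t ∈ S i, f i t) := by
    have h1 : ∀ i, (1 - ∑ t ∈ S i, f i t) = ∑ t ∈ (S i)ᶜ, f i t := by
      intro i
      have := Finset.sum_compl_add_sum (S i) (f i)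
      rw [hf1 i] at this
      linarith
    rw [Finset.prod_congr rfl fun i _ => h1 i, Finset.prod_univ_sum]
    rw [← Finset.sum_filter]
    refine Finset.sum_congr ?_ fun _ _ => rfl
    ext v
    simp [Fintype.mem_piFinset]
  calc ∑ i, ∑ t ∈ S i, f i t * y i t
      ≤ ∑ v : ∀ j, V j, (if ∀ i, v i ∉ S i then 0 else p v) := by
        rw [key]; exact Finset.sum_le_sum fun v _ => hbound v
    _ = ∑ v : ∀ j, V j, (p v - (if ∀ i, v i ∉ S i then p v else 0)) := by
        refine Finset.sum_congr rfl fun v _ => ?_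
        split_ifs <;> ring
    _ = 1 - ∏ i, (1 - ∑ t ∈ S i, f i t) := by
        rw [Finset.sum_sub_distrib, hsum_p, hprod]
end

section
/- Let a = (a₀,…,aₙ) ∈ ℝ^{n+1} with a(x) = a₀ + ∑_{i=1}^n aᵢ(−1)^{1+xᵢ} nonvanishing on {0,1}ⁿ, and let h(x) = sign⁺(a(x)). Then for every f : {0,1}ⁿ → [0,1] with f ≠ h, the Chow vector of h strictly dominates: ∑_{i=0}^n aᵢ·ĥ(i) > ∑_{i=0}^n aᵢ·f̂(i). Consequently the Chow vector of h is a vertex of the polytope Cₙ of feasible Chow vectors. -/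
/-- If the affine form `a(x) = a₀ + ∑ᵢ aᵢ(−1)^{1+xᵢ}` never vanishes on `{0,1}ⁿ` and
`h = sign⁺ ∘ a`, then for every bounded `f ≠ h`, the linear functional given by `a`
on Chow vectors is strictly larger at `h` than at `f` (so the Chow vector of `h` is a
vertex of the Chow polytope). -/
theorem halfspace_chow_vertex (n : ℕ) (a : Fin (n + 1) → ℝ)
    (hnv : ∀ x : Fin n → Bool, a 0 + ∑ i : Fin n, a i.succ * (if x i then 1 else -1) ≠ 0)
    (h : (Fin n → Bool) → ℝ)
    (hh : ∀ x, h x =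
      if 0 ≤ a 0 + ∑ i : Fin n, a i.succ * (if x i then 1 else -1) then 1 else 0)
    (f : (Fin n → Bool) → ℝ) (hf : ∀ x, 0 ≤ f x ∧ f x ≤ 1) (hfh : f ≠ h) :
    a 0 * ((∑ x : Fin n → Bool, f x) / 2 ^ n) +
        ∑ i : Fin n, a i.succ * ((∑ x : Fin n → Bool, f x * (if x i then 1 else -1)) / 2 ^ n) <
      a 0 * ((∑ x : Fin n → Bool, h x) / 2 ^ n) +
        ∑ i : Fin n, a i.succ * ((∑ x : Fin n → Bool, h x * (if x i then 1 else -1)) / 2 ^ n) := by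
  set A : (Fin n → Bool) → ℝ :=
    fun x => a 0 + ∑ i : Fin n, a i.succ * (if x i then 1 else -1) with hA
  have key : ∀ g : (Fin n → Bool) → ℝ,
      a 0 * ((∑ x : Fin n → Bool, g x) / 2 ^ n) +
        ∑ i : Fin n, a i.succ * ((∑ x : Fin n → Bool, g x * (if x i then 1 else -1)) / 2 ^ n)
      = (∑ x : Fin n → Bool, g x * A x) / 2 ^ n := by
    intro g
    simp only [mul_div_assoc', ← Finset.sum_div, ← add_div]
    congr 1
    have hx : ∀ x, g x * A x
        = g x * a 0 + ∑ i : Fin n, a i.succ * (g x * (if x i then 1 else -1)) := by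
      intro x
      simp only [hA, mul_add, Finset.mul_sum]
      congr 1
      exact Finset.sum_congr rfl fun i _ => by ring
    rw [Finset.sum_congr rfl fun x _ => hx x, Finset.sum_add_distrib, Finset.sum_comm]
    simp only [← Finset.mul_sum, ← Finset.sum_mul]
    ring
  rw [key f, key h]
  have hpow : (0:ℝ) < 2 ^ n := by positivity
  apply div_lt_div_of_pos_right ?_ hpow
  obtain ⟨x0, hx0⟩ : ∃ x, f x ≠ h x := by
    by_contra hc
    push_neg at hc
    exact hfh (funext hc)
  refine Finset.sum_lt_sum (fun x _ => ?_) ⟨x0, Finset.mem_univ x0, ?_⟩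
  · by_cases hc : 0 ≤ A x
    · have hApos : 0 < A x := lt_of_le_of_ne hc (Ne.symm (hnv x))
      have := hf x
      rw [hh x, if_pos hc]
      nlinarith [this.1, this.2]
    · push_neg at hc
      have := hf x
      rw [hh x, if_neg (not_le.mpr hc)]
      nlinarith [this.1]
  · by_cases hc : 0 ≤ A x0
    · have hApos : 0 < A x0 := lt_of_le_of_ne hc (Ne.symm (hnv x0))
      have hb := hf x0
      have hne : f x0 ≠ 1 := by rw [hh x0, if_pos hc] at hx0; exact hx0
      have : f x0 < 1 := lt_of_le_of_ne hb.2 hne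
      rw [hh x0, if_pos hc]
      nlinarith
    · push_neg at hc
      have hb := hf x0
      have hne : f x0 ≠ 0 := by rw [hh x0, if_neg (not_le.mpr hc)] at hx0; exact hx0
      have : 0 < f x0 := lt_of_le_of_ne hb.1 (Ne.symm hne)
      rw [hh x0, if_neg (not_le.mpr hc)]
      nlinarith
end

section
/- In the Boolean public project setting with values a₁,…,aₙ ≥ 0 and uniform independent types (each player i has value aᵢ or 0 with probability 1/2 each), the maximum over functions f : {0,1}ⁿ → [0,1] of ∑_{i=1}^n (aᵢ/2)·(E[f(x) | xᵢ = 1] − E[f(x) | xᵢ = 0]) equals K(a)/2, where K(a) = E_{y ~ uniform on {−1,1}ⁿ}[|∑ᵢ aᵢyᵢ|]. -/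
open Finset

private def gfun (n : ℕ) (a : Fin n → ℝ) (x : Fin n → Bool) : ℝ :=
  ∑ i, a i * (if x i then 1 else -1)

private lemma card_filter_eq (n : ℕ) (i : Fin n) :
    (Finset.univ.filter fun x : Fin n → Bool => x i = true).card
      = (Finset.univ.filter fun x : Fin n → Bool => x i = false).card := by
  apply Finset.card_bij (fun x _ => Function.update x i false)
  · intro x hx
    simp
  · intro x hx y hy h
    simp only [Finset.mem_filter, Finset.mem_univ, true_and] at hx hy
    funext j
    by_cases hj : j = i
    · subst hj; rw [hx, hy]
    · have := congrFun h j
      simpa [Function.update_of_ne hj] using this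
  · intro y hy
    simp only [Finset.mem_filter, Finset.mem_univ, true_and] at hy
    refine ⟨Function.update y i true, by simp, ?_⟩
    funext j
    by_cases hj : j = i
    · subst hj; simp [hy]
    · simp [Function.update_of_ne hj]

private lemma card_filter_sum (n : ℕ) (i : Fin n) :
    (Finset.univ.filter fun x : Fin n → Bool => x i = true).card
      + (Finset.univ.filter fun x : Fin n → Bool => x i = false).card = 2 ^ n := by
  have h := Finset.card_filter_add_card_filter_not
    (s := (Finset.univ : Finset (Fin n → Bool))) (p := fun x => x i = true)
  have h2 : (Finset.univ.filter fun x : Fin n → Bool => ¬ x i = true)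
      = (Finset.univ.filter fun x : Fin n → Bool => x i = false) := by
    apply Finset.filter_congr
    intro x _
    simp
  rw [h2] at h
  rw [h]
  simp [Finset.card_univ]

private lemma card_filter_real (n : ℕ) (i : Fin n) (b : Bool) :
    (((Finset.univ.filter fun x : Fin n → Bool => x i = b).card : ℝ)) = 2 ^ n / 2 := by
  have h1 : ((Finset.univ.filter fun x : Fin n → Bool => x i = true).card : ℝ)
      = ((Finset.univ.filter fun x : Fin n → Bool => x i = false).card : ℝ) := by
    exact_mod_cast congrArg (Nat.cast : ℕ → ℝ) (card_filter_eq n i)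
  have h2 : ((Finset.univ.filter fun x : Fin n → Bool => x i = true).card : ℝ)
      + ((Finset.univ.filter fun x : Fin n → Bool => x i = false).card : ℝ) = 2 ^ n := by
    exact_mod_cast congrArg (Nat.cast : ℕ → ℝ) (card_filter_sum n i)
  cases b
  · push_cast at *; linarith
  · push_cast at *; linarith

private lemma sum_eps (n : ℕ) (i : Fin n) (f : (Fin n → Bool) → ℝ) :
    ∑ x : Fin n → Bool, f x * (if x i then (1:ℝ) else -1)
      = (∑ x ∈ Finset.univ.filter fun x : Fin n → Bool => x i = true, f x)
        - ∑ x ∈ Finset.univ.filter fun x : Fin n → Bool => x i = false, f x := by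
  have h2 : (Finset.univ.filter fun x : Fin n → Bool => ¬ x i = true)
      = (Finset.univ.filter fun x : Fin n → Bool => x i = false) := by
    apply Finset.filter_congr
    intro x _
    simp
  rw [← Finset.sum_filter_add_sum_filter_not Finset.univ (fun x => x i = true), h2]
  have ht : ∑ x ∈ Finset.univ.filter (fun x : Fin n → Bool => x i = true),
        f x * (if x i then (1:ℝ) else -1)
      = ∑ x ∈ Finset.univ.filter (fun x : Fin n → Bool => x i = true), f x :=
    Finset.sum_congr rfl fun x hx => by
      simp only [Finset.mem_filter] at hx
      rw [if_pos hx.2, mul_one]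
  have hfalse : ∑ x ∈ Finset.univ.filter (fun x : Fin n → Bool => x i = false),
        f x * (if x i then (1:ℝ) else -1)
      = ∑ x ∈ Finset.univ.filter (fun x : Fin n → Bool => x i = false), (- f x) :=
    Finset.sum_congr rfl fun x hx => by
      simp only [Finset.mem_filter] at hx
      rw [if_neg (by simp [hx.2]), mul_neg_one]
  rw [ht, hfalse, Finset.sum_neg_distrib]
  ring

private lemma obj_eq (n : ℕ) (a : Fin n → ℝ) (f : (Fin n → Bool) → ℝ) :
    ∑ i : Fin n, (a i / 2) *
          ((∑ x ∈ Finset.univ.filter fun x : Fin n → Bool => x i = true, f x) /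
              ((Finset.univ.filter fun x : Fin n → Bool => x i = true).card : ℝ) -
            (∑ x ∈ Finset.univ.filter fun x : Fin n → Bool => x i = false, f x) /
              ((Finset.univ.filter fun x : Fin n → Bool => x i = false).card : ℝ))
      = (∑ x : Fin n → Bool, f x * gfun n a x) / 2 ^ n := by
  have h2 : (2:ℝ) ^ n ≠ 0 := by positivity
  have step : ∀ i : Fin n, (a i / 2) *
          ((∑ x ∈ Finset.univ.filter fun x : Fin n → Bool => x i = true, f x) /
              ((Finset.univ.filter fun x : Fin n → Bool => x i = true).card : ℝ) -
            (∑ x ∈ Finset.univ.filter fun x : Fin n → Bool => x i = false, f x) /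
              ((Finset.univ.filter fun x : Fin n → Bool => x i = false).card : ℝ))
      = (∑ x : Fin n → Bool, f x * (a i * (if x i then 1 else -1))) / 2 ^ n := by
    intro i
    have h1 : ∑ x : Fin n → Bool, f x * (a i * (if x i then (1:ℝ) else -1))
        = a i * ((∑ x ∈ Finset.univ.filter fun x : Fin n → Bool => x i = true, f x)
            - ∑ x ∈ Finset.univ.filter fun x : Fin n → Bool => x i = false, f x) := by
      rw [← sum_eps n i f, Finset.mul_sum]
      exact Finset.sum_congr rfl fun x _ => by ring
    rw [card_filter_real n i true, card_filter_real n i false, h1]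
    field_simp
  rw [Finset.sum_congr rfl fun i _ => step i, ← Finset.sum_div]
  congr 1
  rw [Finset.sum_comm]
  refine Finset.sum_congr rfl fun x _ => ?_
  rw [gfun, Finset.mul_sum]

private lemma sum_g_zero (n : ℕ) (a : Fin n → ℝ) :
    ∑ x : Fin n → Bool, gfun n a x = 0 := by
  unfold gfun
  rw [Finset.sum_comm]
  refine Finset.sum_eq_zero fun i _ => ?_
  have h := sum_eps n i (fun _ => a i)
  simp only [Finset.sum_const, nsmul_eq_mul] at h
  rw [h, card_filter_eq n i, sub_self]

/-- Optimal revenue for the Boolean public project problem: the maximum over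
`f : {0,1}ⁿ → [0,1]` of `∑ᵢ (aᵢ/2)(E[f | xᵢ = 1] − E[f | xᵢ = 0])` equals `K(a)/2`,
where `K(a)` is the Khintchine constant of `a`. -/
theorem public_project_opt_rev (n : ℕ) (a : Fin n → ℝ) (ha : ∀ i, 0 ≤ a i) :
    IsGreatest
      {v : ℝ | ∃ f : (Fin n → Bool) → ℝ, (∀ x, 0 ≤ f x ∧ f x ≤ 1) ∧
        v = ∑ i : Fin n, (a i / 2) *
          ((∑ x ∈ Finset.univ.filter fun x : Fin n → Bool => x i = true, f x) /
              ((Finset.univ.filter fun x : Fin n → Bool => x i = true).card : ℝ) -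
            (∑ x ∈ Finset.univ.filter fun x : Fin n → Bool => x i = false, f x) /
              ((Finset.univ.filter fun x : Fin n → Bool => x i = false).card : ℝ))}
      (((∑ y : Fin n → Bool, |∑ i, a i * (if y i then 1 else -1)|) / 2 ^ n) / 2) := by
  have habs : ∀ y : Fin n → Bool, |∑ i, a i * (if y i then (1:ℝ) else -1)| = |gfun n a y| :=
    fun y => rfl
  have hg0 := sum_g_zero n a
  have hmax : ∑ x : Fin n → Bool, (|gfun n a x| + gfun n a x) / 2
      = (∑ x : Fin n → Bool, |gfun n a x|) / 2 := by
    rw [← Finset.sum_div, Finset.sum_add_distrib, hg0, add_zero]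
  constructor
  · refine ⟨fun x => if 0 ≤ gfun n a x then 1 else 0, fun x => ?_, ?_⟩
    · dsimp only
      split <;> norm_num
    · rw [obj_eq n a]
      simp only [habs]
      have : ∑ x : Fin n → Bool, (if 0 ≤ gfun n a x then (1:ℝ) else 0) * gfun n a x
          = ∑ x : Fin n → Bool, (|gfun n a x| + gfun n a x) / 2 := by
        refine Finset.sum_congr rfl fun x _ => ?_
        rcases le_or_gt 0 (gfun n a x) with h | h
        · rw [if_pos h, abs_of_nonneg h]; ring
        · rw [if_neg (not_le.mpr h), abs_of_neg h]; ring
      rw [this, hmax]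
      ring
  · rintro v ⟨f, hf, rfl⟩
    rw [obj_eq n a f]
    simp only [habs]
    have key : ∑ x : Fin n → Bool, f x * gfun n a x
        ≤ (∑ x : Fin n → Bool, |gfun n a x|) / 2 := by
      rw [← hmax]
      refine Finset.sum_le_sum fun x _ => ?_
      rcases le_or_gt 0 (gfun n a x) with h | h
      · rw [abs_of_nonneg h]
        nlinarith [(hf x).1, (hf x).2]
      · rw [abs_of_neg h]
        nlinarith [(hf x).1, (hf x).2]
    calc (∑ x : Fin n → Bool, f x * gfun n a x) / 2 ^ n
        ≤ ((∑ x : Fin n → Bool, |gfun n a x|) / 2) / 2 ^ n := by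
          gcongr
      _ = ((∑ x : Fin n → Bool, |gfun n a x|) / 2 ^ n) / 2 := by ring
end
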